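/- Let C be a pointed category with binary products and coequalizers which is regularly coextensive, i.e. every object A of C has the property: for every binary product diagram (A, a₁ : A ⟶ X₁, a₂ : A ⟶ X₂), all regular epimorphisms q₁ : X₁ ⟶ Q₁, q : A ⟶ Q, q₂ : X₂ ⟶ Q₂ and all morphisms r₁ : Q ⟶ Q₁, r₂ : Q ⟶ Q₂ with a₁ ≫ q₁ = q ≫ r₁ and a₂ ≫ q₂ = q ≫ r₂, the cone (Q, r₁, r₂) is a binary product diagram if and only if both commuting squares are pushout squares. Then C is anticommutative. -/

import Mathlib

open CategoryTheory CategoryTheory.Limits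

universe v u

variable {C : Type u} [Category.{v} C]

/-- Two morphisms `f : X ⟶ Z` and `g : Y ⟶ Z` in a pointed category are *disjoint*
if whenever `x ≫ f = y ≫ g` then both composites are zero. -/
def CategoryTheory.AreDisjoint [HasZeroMorphisms C]
    {X Y Z : C} (f : X ⟶ Z) (g : Y ⟶ Z) : Prop :=
  ∀ ⦃S : C⦄ (x : S ⟶ X) (y : S ⟶ Y), x ≫ f = y ≫ g → x ≫ f = 0 ∧ y ≫ g = 0

/-- Two morphisms `f : X ⟶ Z` and `g : Y ⟶ Z` *commute in the sense of Huq* if there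
is a cooperator `ρ : X ⨯ Y ⟶ Z` restricting to `f` and `g` along the product inclusions. -/
def CategoryTheory.HuqCommute [HasZeroMorphisms C] [HasBinaryProducts C]
    {X Y Z : C} (f : X ⟶ Z) (g : Y ⟶ Z) : Prop :=
  ∃ ρ : X ⨯ Y ⟶ Z, prod.lift (𝟙 X) 0 ≫ ρ = f ∧ prod.lift 0 (𝟙 Y) ≫ ρ = g

/-- A pointed category with binary products is *anticommutative* if every pair of
commuting morphisms is disjoint. -/
def CategoryTheory.Anticommutative (C : Type u) [Category.{v} C]
    [HasZeroMorphisms C] [HasBinaryProducts C] : Prop :=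
  ∀ ⦃X Y Z : C⦄ (f : X ⟶ Z) (g : Y ⟶ Z), HuqCommute f g → AreDisjoint f g

/-- A pointed category with binary products and coequalizers which is regularly
coextensive is anticommutative. Here regular coextensivity of every object is stated as:
for every binary product diagram `(A, a₁, a₂)`, regular epimorphisms `q₁, q, q₂` and
morphisms `r₁, r₂` making the two squares commute, `(Q, r₁, r₂)` is a binary product
diagram iff both squares are pushouts. -/
theorem anticommutative_of_regularly_coextensive [HasZeroObject C] [HasZeroMorphisms C]
    [HasBinaryProducts C] [HasCoequalizers C]
    (hcoext : ∀ ⦃A X₁ X₂ Q₁ Q Q₂ : C⦄ (a₁ : A ⟶ X₁) (a₂ : A ⟶ X₂),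
      Nonempty (IsLimit (BinaryFan.mk a₁ a₂)) →
      ∀ (q₁ : X₁ ⟶ Q₁) (q : A ⟶ Q) (q₂ : X₂ ⟶ Q₂) (r₁ : Q ⟶ Q₁) (r₂ : Q ⟶ Q₂),
        RegularEpi q₁ → RegularEpi q → RegularEpi q₂ →
        a₁ ≫ q₁ = q ≫ r₁ → a₂ ≫ q₂ = q ≫ r₂ →
        (Nonempty (IsLimit (BinaryFan.mk r₁ r₂)) ↔
          (IsPushout a₁ q q₁ r₁ ∧ IsPushout a₂ q q₂ r₂))) :
    Anticommutative C := by
  intro X Y Z f g hfg S x y hxy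
  obtain ⟨ρ, hρ₁, hρ₂⟩ := hfg
  set ι₁ : X ⟶ X ⨯ Y := prod.lift (𝟙 X) 0 with hι₁
  set ι₂ : Y ⟶ X ⨯ Y := prod.lift 0 (𝟙 Y) with hι₂
  have hcond : (x ≫ ι₁) ≫ ρ = (y ≫ ι₂) ≫ ρ := by
    rw [Category.assoc, Category.assoc, hρ₁, hρ₂]; exact hxy
  -- the three regular epis
  set q : X ⨯ Y ⟶ coequalizer (x ≫ ι₁) (y ≫ ι₂) := coequalizer.π (x ≫ ι₁) (y ≫ ι₂) with hq
  set q₁ : X ⟶ coequalizer x (0 : S ⟶ X) := coequalizer.π x 0 with hq₁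
  set q₂ : Y ⟶ coequalizer y (0 : S ⟶ Y) := coequalizer.π y 0 with hq₂
  have hx0 : x ≫ q₁ = 0 := by rw [hq₁, coequalizer.condition x 0, zero_comp]
  have hy0 : y ≫ q₂ = 0 := by rw [hq₂, coequalizer.condition y 0, zero_comp]
  have hqcond : (x ≫ ι₁) ≫ q = (y ≫ ι₂) ≫ q := coequalizer.condition _ _
  -- the comparison maps r₁, r₂
  have hr₁cond : (x ≫ ι₁) ≫ prod.fst ≫ q₁ = (y ≫ ι₂) ≫ prod.fst ≫ q₁ := by
    simp [hι₁, hι₂]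
    rw [prod.lift_fst_assoc, prod.lift_fst_assoc, hx0, zero_comp]
  have hr₂cond : (x ≫ ι₁) ≫ prod.snd ≫ q₂ = (y ≫ ι₂) ≫ prod.snd ≫ q₂ := by
    simp [hι₁, hι₂]
    rw [prod.lift_snd_assoc, prod.lift_snd_assoc, hy0, zero_comp]
  set r₁ := coequalizer.desc (prod.fst ≫ q₁) hr₁cond with hr₁
  set r₂ := coequalizer.desc (prod.snd ≫ q₂) hr₂cond with hr₂
  have w₁ : (prod.fst : X ⨯ Y ⟶ X) ≫ q₁ = q ≫ r₁ := (coequalizer.π_desc _ _).symm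
  have w₂ : (prod.snd : X ⨯ Y ⟶ Y) ≫ q₂ = q ≫ r₂ := (coequalizer.π_desc _ _).symm
  -- the first square is a pushout
  have push1 : IsPushout (prod.fst : X ⨯ Y ⟶ X) q q₁ r₁ := by
    have key : ∀ (s : PushoutCocone (prod.fst : X ⨯ Y ⟶ X) q), x ≫ s.inl = 0 ≫ s.inl := by
      intro s
      have h1 : x ≫ s.inl = x ≫ ι₁ ≫ prod.fst ≫ s.inl := by
        simp only [hι₁, prod.lift_fst_assoc, Category.id_comp]
      have h2 : x ≫ ι₁ ≫ prod.fst ≫ s.inl = x ≫ ι₁ ≫ q ≫ s.inr := by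
        rw [s.condition]
      have h3 : x ≫ ι₁ ≫ q ≫ s.inr = y ≫ ι₂ ≫ q ≫ s.inr := by
        have := hqcond =≫ s.inr
        simpa using this
      have h4 : y ≫ ι₂ ≫ q ≫ s.inr = y ≫ ι₂ ≫ prod.fst ≫ s.inl := by
        rw [s.condition]
      have h5 : y ≫ ι₂ ≫ prod.fst ≫ s.inl = 0 := by
        simp only [hι₂, prod.lift_fst_assoc, zero_comp, comp_zero]
      rw [h1, h2, h3, h4, h5, zero_comp]
    exact IsPushout.of_isColimit (PushoutCocone.IsColimit.mk w₁
      (fun s => coequalizer.desc s.inl (key s))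
      (fun s => coequalizer.π_desc _ _)
      (fun s => by
        apply coequalizer.hom_ext
        rw [← Category.assoc, ← hq, ← w₁, Category.assoc, coequalizer.π_desc, s.condition])
      (fun s m hm₁ hm₂ => by
        apply coequalizer.hom_ext
        rw [coequalizer.π_desc, ← hq₁]; exact hm₁))
  -- the second square is a pushout
  have push2 : IsPushout (prod.snd : X ⨯ Y ⟶ Y) q q₂ r₂ := by
    have key : ∀ (s : PushoutCocone (prod.snd : X ⨯ Y ⟶ Y) q), y ≫ s.inl = 0 ≫ s.inl := by
      intro s
      have h1 : y ≫ s.inl = y ≫ ι₂ ≫ prod.snd ≫ s.inl := by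
        simp only [hι₂, prod.lift_snd_assoc, Category.id_comp]
      have h2 : y ≫ ι₂ ≫ prod.snd ≫ s.inl = y ≫ ι₂ ≫ q ≫ s.inr := by
        rw [s.condition]
      have h3 : y ≫ ι₂ ≫ q ≫ s.inr = x ≫ ι₁ ≫ q ≫ s.inr := by
        have := hqcond =≫ s.inr
        simpa using this.symm
      have h4 : x ≫ ι₁ ≫ q ≫ s.inr = x ≫ ι₁ ≫ prod.snd ≫ s.inl := by
        rw [s.condition]
      have h5 : x ≫ ι₁ ≫ prod.snd ≫ s.inl = 0 := by
        simp only [hι₁, prod.lift_snd_assoc, zero_comp, comp_zero]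
      rw [h1, h2, h3, h4, h5, zero_comp]
    exact IsPushout.of_isColimit (PushoutCocone.IsColimit.mk w₂
      (fun s => coequalizer.desc s.inl (key s))
      (fun s => coequalizer.π_desc _ _)
      (fun s => by
        apply coequalizer.hom_ext
        rw [← Category.assoc, ← hq, ← w₂, Category.assoc, coequalizer.π_desc, s.condition])
      (fun s m hm₁ hm₂ => by
        apply coequalizer.hom_ext
        rw [coequalizer.π_desc, ← hq₂]; exact hm₁))
  -- regular coextensivity gives that (Q, r₁, r₂) is a product
  obtain ⟨P⟩ := (hcoext (prod.fst : X ⨯ Y ⟶ X) (prod.snd : X ⨯ Y ⟶ Y)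
    ⟨prodIsProd X Y⟩ q₁ q q₂ r₁ r₂ (coequalizerRegular _ _) (coequalizerRegular _ _)
    (coequalizerRegular _ _) w₁ w₂).mpr
    ⟨push1, push2⟩
  -- ρ factors through q
  set ρ' := coequalizer.desc ρ hcond with hρ'
  have hfactor : q ≫ ρ' = ρ := coequalizer.π_desc _ _
  -- x ≫ ι₁ ≫ q = 0 and y ≫ ι₂ ≫ q = 0, by comparing components in the product Q
  have hxq : x ≫ ι₁ ≫ q = 0 := by
    apply BinaryFan.IsLimit.hom_ext P
    · show (x ≫ ι₁ ≫ q) ≫ r₁ = (0 : S ⟶ _) ≫ r₁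
      rw [zero_comp]
      rw [Category.assoc, Category.assoc, ← w₁]
      rw [hι₁, prod.lift_fst_assoc, Category.id_comp, hx0]
    · show (x ≫ ι₁ ≫ q) ≫ r₂ = (0 : S ⟶ _) ≫ r₂
      rw [zero_comp]
      rw [Category.assoc, Category.assoc, ← w₂]
      rw [hι₁, prod.lift_snd_assoc, zero_comp, comp_zero]
  have hyq : y ≫ ι₂ ≫ q = 0 := by
    apply BinaryFan.IsLimit.hom_ext P
    · show (y ≫ ι₂ ≫ q) ≫ r₁ = (0 : S ⟶ _) ≫ r₁
      rw [zero_comp]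
      rw [Category.assoc, Category.assoc, ← w₁]
      rw [hι₂, prod.lift_fst_assoc, zero_comp, comp_zero]
    · show (y ≫ ι₂ ≫ q) ≫ r₂ = (0 : S ⟶ _) ≫ r₂
      rw [zero_comp]
      rw [Category.assoc, Category.assoc, ← w₂]
      rw [hι₂, prod.lift_snd_assoc, Category.id_comp, hy0]
  constructor
  · rw [← hρ₁, ← hfactor]
    calc x ≫ ι₁ ≫ q ≫ ρ' = (x ≫ ι₁ ≫ q) ≫ ρ' := by simp
      _ = 0 := by rw [hxq, zero_comp]
  · rw [← hρ₂, ← hfactor]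
    calc y ≫ ι₂ ≫ q ≫ ρ' = (y ≫ ι₂ ≫ q) ≫ ρ' := by simp
      _ = 0 := by rw [hyq, zero_comp]
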